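/- Let x, μ ∈ ℝ^d with x ≠ μ, let v ∈ ℝ^d be a unit vector with ⟨v, (μ − x)/‖μ − x‖⟩ ≥ 1/2, and let d be a real number with (3/4)·‖x − μ‖ ≤ d ≤ (5/4)·‖x − μ‖. Then ‖x + (d/4)·v − μ‖² ≤ (23/25)·‖x − μ‖². -/

import Mathlib

noncomputable section

theorem stmt4 {D : ℕ} (x μ : EuclideanSpace ℝ (Fin D)) (hxμ : x ≠ μ)
    (v : EuclideanSpace ℝ (Fin D)) (hv : ‖v‖ = 1)
    (halign : (1 / 2 : ℝ) ≤ (inner ℝ v (‖μ - x‖⁻¹ • (μ - x)) : ℝ))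
    (d : ℝ) (hd₁ : (3 / 4 : ℝ) * ‖x - μ‖ ≤ d) (hd₂ : d ≤ (5 / 4 : ℝ) * ‖x - μ‖) :
    ‖x + (d / 4) • v - μ‖ ^ 2 ≤ (23 / 25 : ℝ) * ‖x - μ‖ ^ 2 := by
  have hr : (0 : ℝ) < ‖x - μ‖ := by
    rw [norm_pos_iff]; exact sub_ne_zero.mpr hxμ
  set r := ‖x - μ‖ with hrdef
  have hrμ : ‖μ - x‖ = r := by rw [hrdef, norm_sub_rev]
  have hin : (inner ℝ v (μ - x) : ℝ) = r * (inner ℝ v (‖μ - x‖⁻¹ • (μ - x)) : ℝ) := by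
    rw [real_inner_smul_right, hrμ]
    field_simp
  have hin2 : r / 2 ≤ (inner ℝ v (μ - x) : ℝ) := by
    rw [hin]
    have := mul_le_mul_of_nonneg_left halign hr.le
    linarith
  have hin3 : (inner ℝ (x - μ) v : ℝ) = -(inner ℝ v (μ - x) : ℝ) := by
    rw [real_inner_comm]
    rw [show x - μ = -(μ - x) by abel, inner_neg_right]
  have heq : x + (d / 4) • v - μ = (x - μ) + (d / 4) • v := by abel
  rw [heq, norm_add_sq_real, real_inner_smul_right, norm_smul, hin3, hv,
    Real.norm_eq_abs]
  have habs : |d / 4| = d / 4 := abs_of_nonneg (by nlinarith)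
  rw [habs]
  nlinarith [hin2, sq_nonneg (d / 4 - r), hr]
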